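/- Let q ≥ 1 and Δ ≥ 3 be integers and let B be a symmetric q×q real matrix with nonnegative entries having at least one positive entry. Then the supremum of Υ₂(γ,δ,y) over all triples (γ,δ,y) that are feasible for the second moment is finite, is attained, and equals exactly twice the supremum of Υ₁(α,β,x) over all triples (α,β,x) that are feasible for the first moment (which is likewise finite and attained). -/

import Mathlib

open Matrix

namespace SecondMomentAux

/-- the exponent (Δ-1)/Δ -/
noncomputable def tex (Δ : ℕ) : ℝ := ((Δ : ℝ) - 1) / Δ

/-- the reduced first-moment functional of the column marginal -/
noncomputable def phiF (Δ : ℕ) {I J : Type*} [Fintype I] [Fintype J]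
    (C : I → J → ℝ) (b : J → ℝ) : ℝ :=
  ∑ i, (∑ j, C i j * b j ^ tex Δ) ^ Δ

open Finset

theorem value_le_log_phiF {I J : Type*} [Fintype I] [Fintype J]
    (Δ : ℕ) (hΔ : 3 ≤ Δ) (C : I → J → ℝ) (hC : ∀ i j, 0 ≤ C i j)
    (a : I → ℝ) (b : J → ℝ) (x : I → J → ℝ)
    (hx0 : ∀ i j, 0 ≤ x i j) (hsupp : ∀ i j, C i j = 0 → x i j = 0)
    (hrow : ∀ i, (∑ j, x i j) = a i) (hcol : ∀ j, (∑ i, x i j) = b j)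
    (ha1 : (∑ i, a i) = 1) :
    0 < phiF Δ C b ∧
      ((Δ : ℝ) - 1) * ((∑ i, a i * Real.log (a i)) + ∑ j, b j * Real.log (b j))
        + (Δ : ℝ) * ((∑ i, ∑ j, x i j * Real.log (C i j))
            - ∑ i, ∑ j, x i j * Real.log (x i j)) ≤ Real.log (phiF Δ C b) := by
  have hΔR : (3 : ℝ) ≤ (Δ : ℝ) := by exact_mod_cast hΔ
  have hΔpos : (0 : ℝ) < (Δ : ℝ) := by linarith
  set t : ℝ := tex Δ with ht_def
  have ht0 : 0 < t := div_pos (by linarith) hΔpos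
  have ht1 : t < 1 := (div_lt_one hΔpos).2 (by linarith)
  have htΔ : t * (Δ : ℝ) = (Δ : ℝ) - 1 := div_mul_cancel₀ _ (ne_of_gt hΔpos)
  have ha0 : ∀ i, 0 ≤ a i := fun i => (hrow i) ▸ Finset.sum_nonneg (fun j _ => hx0 i j)
  have hb0 : ∀ j, 0 ≤ b j := fun j => (hcol j) ▸ Finset.sum_nonneg (fun i _ => hx0 i j)
  set S : ℝ := ∑ i, ∑ j, C i j * a i ^ t * b j ^ t with hS_def
  have hsum1 : ∑ i, ∑ j, x i j = 1 := by simp only [hrow]; exact ha1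
  -- there is a positive entry of x
  have hxpos : ∃ i0 j0, 0 < x i0 j0 := by
    by_contra hcon
    push_neg at hcon
    have hzero : ∀ i j, x i j = 0 := fun i j => le_antisymm (hcon i j) (hx0 i j)
    simp [hzero] at hsum1
  obtain ⟨i0, j0, hx00⟩ := hxpos
  have hCpos : ∀ i j, 0 < x i j → 0 < C i j := by
    intro i j hx
    rcases eq_or_lt_of_le (hC i j) with h | h
    · rw [hsupp i j h.symm] at hx; exact absurd hx (lt_irrefl 0)
    · exact h
  have hapos : ∀ i j, 0 < x i j → 0 < a i := by
    intro i j hx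
    exact lt_of_lt_of_le hx ((hrow i) ▸ Finset.single_le_sum (fun j' _ => hx0 i j') (mem_univ j))
  have hbpos : ∀ i j, 0 < x i j → 0 < b j := by
    intro i j hx
    exact lt_of_lt_of_le hx ((hcol j) ▸ Finset.single_le_sum (fun i' _ => hx0 i' j) (mem_univ i))
  have hw0 : ∀ i j, 0 ≤ C i j * a i ^ t * b j ^ t := by
    intro i j
    exact mul_nonneg (mul_nonneg (hC i j) (Real.rpow_nonneg (ha0 i) t)) (Real.rpow_nonneg (hb0 j) t)
  have hSpos : 0 < S := by
    have h1 : C i0 j0 * a i0 ^ t * b j0 ^ t ≤ ∑ j, C i0 j * a i0 ^ t * b j ^ t :=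
      Finset.single_le_sum (fun j _ => hw0 i0 j) (mem_univ j0)
    have h2 : (∑ j, C i0 j * a i0 ^ t * b j ^ t) ≤ S :=
      Finset.single_le_sum (f := fun i => ∑ j, C i j * a i ^ t * b j ^ t)
        (fun i _ => Finset.sum_nonneg fun j _ => hw0 i j) (mem_univ i0)
    have hterm : 0 < C i0 j0 * a i0 ^ t * b j0 ^ t := by
      have := hCpos i0 j0 hx00
      have := hapos i0 j0 hx00
      have := hbpos i0 j0 hx00
      positivity
    linarith
  -- per-term Gibbs inequality
  have key : ∀ i j,
      x i j * Real.log (C i j) + t * (x i j * Real.log (a i)) + t * (x i j * Real.log (b j))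
        - x i j * Real.log (x i j)
      ≤ (C i j * a i ^ t * b j ^ t) / S - x i j + x i j * Real.log S := by
    intro i j
    rcases eq_or_lt_of_le (hx0 i j) with hx | hx
    · rw [← hx]
      simp only [zero_mul, mul_zero, add_zero, sub_zero, zero_add]
      have : 0 ≤ (C i j * a i ^ t * b j ^ t) / S := div_nonneg (hw0 i j) hSpos.le
      linarith
    · have hC' : 0 < C i j := hCpos i j hx
      have ha' : 0 < a i := hapos i j hx
      have hb' : 0 < b j := hbpos i j hx
      have hw' : 0 < C i j * a i ^ t * b j ^ t := by positivity
      have hlogw : Real.log (C i j * a i ^ t * b j ^ t)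
          = Real.log (C i j) + t * Real.log (a i) + t * Real.log (b j) := by
        rw [Real.log_mul (by positivity) (by positivity),
          Real.log_mul (by positivity) (by positivity),
          Real.log_rpow ha', Real.log_rpow hb']
      have hbase : Real.log ((C i j * a i ^ t * b j ^ t) / (x i j * S))
          ≤ (C i j * a i ^ t * b j ^ t) / (x i j * S) - 1 :=
        Real.log_le_sub_one_of_pos (by positivity)
      have hlogdiv : Real.log ((C i j * a i ^ t * b j ^ t) / (x i j * S))
          = Real.log (C i j * a i ^ t * b j ^ t) - Real.log (x i j) - Real.log S := by
        rw [Real.log_div (ne_of_gt hw') (by positivity), Real.log_mul (ne_of_gt hx) (ne_of_gt hSpos)]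
        ring
      have hmul := mul_le_mul_of_nonneg_left hbase hx.le
      have hxs : x i j * ((C i j * a i ^ t * b j ^ t) / (x i j * S) - 1)
          = (C i j * a i ^ t * b j ^ t) / S - x i j := by
        field_simp
      rw [hxs, hlogdiv, hlogw] at hmul
      calc x i j * Real.log (C i j) + t * (x i j * Real.log (a i)) + t * (x i j * Real.log (b j))
            - x i j * Real.log (x i j)
          = x i j * (Real.log (C i j) + t * Real.log (a i) + t * Real.log (b j)
              - Real.log (x i j) - Real.log S) + x i j * Real.log S := by ring
        _ ≤ ((C i j * a i ^ t * b j ^ t) / S - x i j) + x i j * Real.log S := by linarith [hmul]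
        _ = (C i j * a i ^ t * b j ^ t) / S - x i j + x i j * Real.log S := by ring
  -- summed Gibbs inequality
  have Gsum : (∑ i, ∑ j, (x i j * Real.log (C i j) + t * (x i j * Real.log (a i))
        + t * (x i j * Real.log (b j)) - x i j * Real.log (x i j)))
      ≤ Real.log S := by
    have h1 : (∑ i, ∑ j, (x i j * Real.log (C i j) + t * (x i j * Real.log (a i))
        + t * (x i j * Real.log (b j)) - x i j * Real.log (x i j)))
        ≤ ∑ i, ∑ j, ((C i j * a i ^ t * b j ^ t) / S - x i j + x i j * Real.log S) :=
      Finset.sum_le_sum fun i _ => Finset.sum_le_sum fun j _ => key i j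
    have h2 : (∑ i, ∑ j, ((C i j * a i ^ t * b j ^ t) / S - x i j + x i j * Real.log S))
        = S / S - 1 + Real.log S := by
      simp only [Finset.sum_add_distrib, Finset.sum_sub_distrib, ← Finset.sum_div, ← hS_def,
        ← Finset.sum_mul, hsum1]
      ring
    rw [h2, div_self (ne_of_gt hSpos)] at h1
    linarith
  -- rewrite marginal sums
  have expandA : ∑ i, ∑ j, x i j * Real.log (a i) = ∑ i, a i * Real.log (a i) := by
    refine Finset.sum_congr rfl fun i _ => ?_
    rw [← Finset.sum_mul, hrow]
  have expandB : ∑ i, ∑ j, x i j * Real.log (b j) = ∑ j, b j * Real.log (b j) := by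
    rw [Finset.sum_comm]
    refine Finset.sum_congr rfl fun j _ => ?_
    rw [← Finset.sum_mul, hcol]
  have Gdecomp : (∑ i, ∑ j, (x i j * Real.log (C i j) + t * (x i j * Real.log (a i))
        + t * (x i j * Real.log (b j)) - x i j * Real.log (x i j)))
      = (∑ i, ∑ j, x i j * Real.log (C i j)) + t * (∑ i, a i * Real.log (a i))
        + t * (∑ j, b j * Real.log (b j)) - ∑ i, ∑ j, x i j * Real.log (x i j) := by
    simp only [Finset.sum_add_distrib, Finset.sum_sub_distrib, ← Finset.mul_sum]
    rw [expandA, expandB]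
  -- Jensen step
  set r : I → ℝ := fun i => ∑ j, C i j * b j ^ t with hr_def
  have hr0 : ∀ i, 0 ≤ r i := fun i =>
    Finset.sum_nonneg fun j _ => mul_nonneg (hC i j) (Real.rpow_nonneg (hb0 j) t)
  set z : I → ℝ := fun i => a i ^ (t - 1) * r i with hz_def
  have hz0 : ∀ i, 0 ≤ z i := fun i => mul_nonneg (Real.rpow_nonneg (ha0 i) _) (hr0 i)
  have hSr : S = ∑ i, a i * z i := by
    rw [hS_def]
    refine Finset.sum_congr rfl fun i _ => ?_
    rcases eq_or_lt_of_le (ha0 i) with hai | hai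
    · rw [← hai]
      simp [Real.zero_rpow (ne_of_gt ht0)]
    · have e1 : a i ^ t = a i * a i ^ (t - 1) := by
        rw [show t = 1 + (t - 1) by ring, Real.rpow_add hai, Real.rpow_one]
        ring_nf
      calc ∑ j, C i j * a i ^ t * b j ^ t = a i ^ t * ∑ j, C i j * b j ^ t := by
            rw [Finset.mul_sum]; exact Finset.sum_congr rfl fun j _ => by ring
        _ = a i * z i := by rw [e1, hz_def]; ring
  have htm : (t - 1) * (Δ : ℝ) = -1 := by
    rw [sub_mul, htΔ]; ring
  have hazΔ : ∀ i, a i * z i ^ Δ ≤ r i ^ Δ := by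
    intro i
    rcases eq_or_lt_of_le (ha0 i) with hai | hai
    · rw [← hai, zero_mul]
      exact pow_nonneg (hr0 i) Δ
    · have e2 : (a i ^ (t - 1)) ^ Δ = a i ^ ((t - 1) * (Δ : ℝ)) := by
        rw [Real.rpow_mul hai.le, Real.rpow_natCast]
      have e3 : a i * a i ^ ((-1 : ℝ)) = 1 := by
        rw [show a i * a i ^ ((-1:ℝ)) = a i ^ ((1:ℝ)) * a i ^ ((-1:ℝ)) by rw [Real.rpow_one],
          ← Real.rpow_add hai]
        norm_num
      have : a i * z i ^ Δ = r i ^ Δ := by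
        rw [hz_def]
        simp only [mul_pow]
        rw [e2, htm, ← mul_assoc, e3, one_mul]
      rw [this]
  have jensen : S ^ Δ ≤ phiF Δ C b := by
    have j1 : (∑ i, a i * z i) ^ Δ ≤ ∑ i, a i * z i ^ Δ :=
      Real.pow_arith_mean_le_arith_mean_pow univ a z (fun i _ => ha0 i) ha1 (fun i _ => hz0 i) Δ
    have j2 : (∑ i, a i * z i ^ Δ) ≤ ∑ i, r i ^ Δ := Finset.sum_le_sum fun i _ => hazΔ i
    rw [hSr]
    exact le_trans j1 j2
  have hphi : 0 < phiF Δ C b := lt_of_lt_of_le (pow_pos hSpos Δ) jensen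
  refine ⟨hphi, ?_⟩
  have hlogS : (Δ : ℝ) * Real.log S ≤ Real.log (phiF Δ C b) := by
    rw [← Real.log_pow]
    exact (Real.log_le_log_iff (pow_pos hSpos Δ) hphi).2 jensen
  have hGle : (Δ : ℝ) * ((∑ i, ∑ j, x i j * Real.log (C i j)) + t * (∑ i, a i * Real.log (a i))
        + t * (∑ j, b j * Real.log (b j)) - ∑ i, ∑ j, x i j * Real.log (x i j))
      ≤ (Δ : ℝ) * Real.log S := by
    apply mul_le_mul_of_nonneg_left _ hΔpos.le
    rw [← Gdecomp]
    exact Gsum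
  have hrw : ((Δ : ℝ) - 1) * ((∑ i, a i * Real.log (a i)) + ∑ j, b j * Real.log (b j))
        + (Δ : ℝ) * ((∑ i, ∑ j, x i j * Real.log (C i j))
            - ∑ i, ∑ j, x i j * Real.log (x i j))
      = (Δ : ℝ) * ((∑ i, ∑ j, x i j * Real.log (C i j)) + t * (∑ i, a i * Real.log (a i))
        + t * (∑ j, b j * Real.log (b j)) - ∑ i, ∑ j, x i j * Real.log (x i j)) := by
    have h1 : (Δ : ℝ) * t = (Δ : ℝ) - 1 := by rw [mul_comm]; exact htΔ
    linear_combination (-((∑ i, a i * Real.log (a i)) + ∑ j, b j * Real.log (b j))) * h1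
  rw [hrw]
  exact le_trans hGle hlogS


theorem hom_bound {I J : Type*} [Fintype I] [Fintype J]
    (Δ : ℕ) (hΔ : 3 ≤ Δ) (C : I → J → ℝ) (hC : ∀ i j, 0 ≤ C i j)
    (K : ℝ) (hK : 0 ≤ K)
    (hmax : ∀ b ∈ stdSimplex ℝ J, phiF Δ C b ≤ K)
    (u : J → ℝ) (hu : ∀ j, 0 ≤ u j) :
    ∑ i, (∑ j, C i j * u j) ^ Δ ≤ K * (∑ j, u j ^ ((Δ : ℝ) / ((Δ : ℝ) - 1))) ^ (Δ - 1) := by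
  have hΔR : (3 : ℝ) ≤ (Δ : ℝ) := by exact_mod_cast hΔ
  have hΔpos : (0 : ℝ) < (Δ : ℝ) := by linarith
  have ht0 : 0 < tex Δ := div_pos (by linarith) hΔpos
  have hp0 : (0:ℝ) < (Δ : ℝ) / ((Δ : ℝ) - 1) := div_pos hΔpos (by linarith)
  set p : ℝ := (Δ : ℝ) / ((Δ : ℝ) - 1) with hp_def
  set t : ℝ := tex Δ with ht_def
  have hpt : p * t = 1 := by
    have h1 : ((Δ:ℝ) - 1) ≠ 0 := by linarith
    rw [hp_def, ht_def, tex]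
    field_simp
  have htΔ : t * (Δ : ℝ) = (Δ : ℝ) - 1 := div_mul_cancel₀ _ (ne_of_gt hΔpos)
  have hcast : ((Δ - 1 : ℕ) : ℝ) = (Δ : ℝ) - 1 := by
    rw [Nat.cast_sub (by omega), Nat.cast_one]
  set T : ℝ := ∑ j, u j ^ p with hT_def
  have hT0 : 0 ≤ T := Finset.sum_nonneg fun j _ => Real.rpow_nonneg (hu j) p
  rcases eq_or_lt_of_le hT0 with hT | hT
  · -- T = 0 : all u j = 0
    have huz : ∀ j, u j = 0 := by
      intro j
      have h1 : ∀ j' ∈ (univ : Finset J), (0:ℝ) ≤ u j' ^ p :=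
        fun j' _ => Real.rpow_nonneg (hu j') p
      have h2 : u j ^ p = 0 := by
        have := (Finset.sum_eq_zero_iff_of_nonneg h1).1 hT.symm j (mem_univ j)
        exact this
      exact ((Real.rpow_eq_zero (hu j) (ne_of_gt hp0)).1 h2)
    have : ∀ i, (∑ j, C i j * u j) ^ Δ = 0 := by
      intro i
      rw [Finset.sum_eq_zero fun j _ => by rw [huz j, mul_zero]]
      exact zero_pow (by omega)
    rw [Finset.sum_eq_zero fun i _ => this i, ← hT]
    rw [zero_pow (by omega), mul_zero]
  · -- T > 0
    set b : J → ℝ := fun j => u j ^ p / T with hb_def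
    have hbmem : b ∈ stdSimplex ℝ J := by
      constructor
      · intro j
        exact div_nonneg (Real.rpow_nonneg (hu j) p) hT0
      · rw [hb_def]
        simp only
        rw [← Finset.sum_div, ← hT_def, div_self (ne_of_gt hT)]
    have hbt : ∀ j, b j ^ t = u j / T ^ t := by
      intro j
      rw [hb_def]
      simp only
      rw [Real.div_rpow (Real.rpow_nonneg (hu j) p) hT0, ← Real.rpow_mul (hu j), hpt,
        Real.rpow_one]
    have hphib : phiF Δ C b = (∑ i, (∑ j, C i j * u j) ^ Δ) / T ^ (Δ - 1) := by
      rw [phiF]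
      have hinner : ∀ i, (∑ j, C i j * b j ^ tex Δ) = (∑ j, C i j * u j) / T ^ t := by
        intro i
        rw [Finset.sum_div]
        refine Finset.sum_congr rfl fun j _ => ?_
        rw [← ht_def, hbt j]
        ring
      have hTt : (T ^ t) ^ Δ = T ^ (Δ - 1) := by
        rw [← Real.rpow_natCast (T ^ t) Δ, ← Real.rpow_mul hT0, ← Real.rpow_natCast T (Δ - 1),
          hcast, htΔ]
      calc ∑ i, (∑ j, C i j * b j ^ tex Δ) ^ Δ
          = ∑ i, ((∑ j, C i j * u j) ^ Δ / (T ^ t) ^ Δ) := by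
            refine Finset.sum_congr rfl fun i _ => ?_
            rw [hinner i, div_pow]
        _ = (∑ i, (∑ j, C i j * u j) ^ Δ) / T ^ (Δ - 1) := by
            rw [← Finset.sum_div, hTt]
    have hle := hmax b hbmem
    rw [hphib] at hle
    have hTpow : 0 < T ^ (Δ - 1) := pow_pos hT _
    calc ∑ i, (∑ j, C i j * u j) ^ Δ
        = ((∑ i, (∑ j, C i j * u j) ^ Δ) / T ^ (Δ - 1)) * T ^ (Δ - 1) := by
          field_simp
      _ ≤ K * T ^ (Δ - 1) := mul_le_mul_of_nonneg_right hle hTpow.le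

theorem kkt {I J : Type*} [Fintype I] [Fintype J] [DecidableEq J]
    (Δ : ℕ) (hΔ : 3 ≤ Δ) (C : I → J → ℝ) (hC : ∀ i j, 0 ≤ C i j)
    (b : J → ℝ) (hb : b ∈ stdSimplex ℝ J)
    (hmax : ∀ b' ∈ stdSimplex ℝ J, phiF Δ C b' ≤ phiF Δ C b) (j : J) :
    b j ^ tex Δ * (∑ i, C i j * (∑ j', C i j' * b j' ^ tex Δ) ^ (Δ - 1))
      = phiF Δ C b * b j := by
  obtain ⟨hb0, hbsum⟩ := hb
  have hΔR : (3 : ℝ) ≤ (Δ : ℝ) := by exact_mod_cast hΔ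
  have hΔpos : (0 : ℝ) < (Δ : ℝ) := by linarith
  set t : ℝ := tex Δ with ht_def
  have ht0 : 0 < t := div_pos (by linarith) hΔpos
  have ht1 : t < 1 := (div_lt_one hΔpos).2 (by linarith)
  have htm1 : t - 1 ≠ 0 := by linarith
  -- the summation identity
  have Isum : ∑ j', b j' ^ t * (∑ i, C i j' * (∑ j'', C i j'' * b j'' ^ t) ^ (Δ - 1))
      = phiF Δ C b := by
    calc ∑ j', b j' ^ t * (∑ i, C i j' * (∑ j'', C i j'' * b j'' ^ t) ^ (Δ - 1))
        = ∑ j', ∑ i, (C i j' * b j' ^ t) * (∑ j'', C i j'' * b j'' ^ t) ^ (Δ - 1) := by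
          refine Finset.sum_congr rfl fun j' _ => ?_
          rw [Finset.mul_sum]
          exact Finset.sum_congr rfl fun i _ => by ring
      _ = ∑ i, ∑ j', (C i j' * b j' ^ t) * (∑ j'', C i j'' * b j'' ^ t) ^ (Δ - 1) :=
          Finset.sum_comm
      _ = ∑ i, (∑ j'', C i j'' * b j'' ^ t) ^ Δ := by
          refine Finset.sum_congr rfl fun i _ => ?_
          rw [← Finset.sum_mul]
          rw [← pow_succ']
          congr 1
          omega
      _ = phiF Δ C b := rfl
  rcases eq_or_lt_of_le (hb0 j) with hbj | hbj
  · rw [← hbj, Real.zero_rpow (ne_of_gt ht0), zero_mul, mul_zero]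
  -- now b j > 0
  set d : J → ℝ := fun j' => (if j' = j then (1:ℝ) else 0) - b j' with hd_def
  have hdsum : ∑ j', d j' = 0 := by
    rw [hd_def]
    simp [Finset.sum_sub_distrib, hbsum]
  have hbj1 : b j ≤ 1 := by
    rw [← hbsum]
    exact Finset.single_le_sum (fun j' _ => hb0 j') (mem_univ j)
  -- coordinatewise derivative
  have hder1 : ∀ j', HasDerivAt (fun ε : ℝ => (b j' + ε * d j') ^ t)
      (t * b j' ^ (t - 1) * d j') 0 := by
    intro j'
    rcases eq_or_lt_of_le (hb0 j') with h0 | hpos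
    · have hne : j' ≠ j := by
        intro h; rw [h] at h0; exact absurd hbj (by rw [← h0]; exact lt_irrefl 0)
      have hd0 : d j' = 0 := by rw [hd_def]; simp [if_neg hne, ← h0]
      have hfun : (fun ε : ℝ => (b j' + ε * d j') ^ t) = fun _ : ℝ => (0:ℝ) := by
        funext ε
        rw [← h0, hd0, mul_zero, add_zero, Real.zero_rpow (ne_of_gt ht0)]
      rw [hfun, hd0, mul_zero]
      exact hasDerivAt_const 0 0
    · have inner : HasDerivAt (fun ε : ℝ => b j' + ε * d j') (d j') 0 := by
        simpa using ((hasDerivAt_id (0:ℝ)).mul_const (d j')).const_add (b j')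
      have h := inner.rpow_const (p := t) (Or.inl (by simp [ne_of_gt hpos]))
      simp only [zero_mul, add_zero] at h
      convert h using 1
      ring
  -- derivative of the full functional
  have hφ : HasDerivAt (fun ε : ℝ => ∑ i, (∑ j', C i j' * (b j' + ε * d j') ^ t) ^ Δ)
      (∑ i, (Δ : ℝ) * (∑ j', C i j' * b j' ^ t) ^ (Δ - 1)
        * (∑ j', C i j' * (t * b j' ^ (t - 1) * d j'))) 0 := by
    refine HasDerivAt.fun_sum fun i _ => ?_
    have hin : HasDerivAt (fun ε : ℝ => ∑ j', C i j' * (b j' + ε * d j') ^ t)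
        (∑ j', C i j' * (t * b j' ^ (t - 1) * d j')) 0 :=
      HasDerivAt.fun_sum fun j' _ => (hder1 j').const_mul (C i j')
    have h := hin.fun_pow Δ
    simp only [zero_mul, add_zero] at h
    convert h using 2
  -- local maximality
  have hloc : IsLocalMax (fun ε : ℝ => ∑ i, (∑ j', C i j' * (b j' + ε * d j') ^ t) ^ Δ) 0 := by
    filter_upwards [Metric.ball_mem_nhds (0:ℝ) hbj] with ε hε
    rw [Metric.mem_ball, Real.dist_eq, sub_zero] at hε
    have hfeas : (fun j' => b j' + ε * d j') ∈ stdSimplex ℝ J := by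
      constructor
      · intro j'
        show 0 ≤ b j' + ε * d j'
        rcases eq_or_ne j' j with rfl | hne
        · have h1 : d j' = 1 - b j' := by rw [hd_def]; simp
          have h2 : |ε * d j'| ≤ |ε| := by
            rw [abs_mul]
            have : |d j'| ≤ 1 := by rw [h1, abs_of_nonneg (by linarith)]; linarith
            nlinarith [abs_nonneg ε]
          have := neg_abs_le (ε * d j')
          linarith [abs_nonneg ε]
        · have h1 : d j' = - b j' := by rw [hd_def]; simp [if_neg hne]
          have hε1 : ε ≤ 1 := by
            have := le_abs_self ε
            linarith
          rw [h1]
          have : b j' + ε * (- b j') = b j' * (1 - ε) := by ring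
          rw [this]
          exact mul_nonneg (hb0 j') (by linarith)
      · rw [Finset.sum_add_distrib, hbsum, ← Finset.mul_sum, hdsum, mul_zero, add_zero]
    have h2 := hmax _ hfeas
    simpa only [phiF, zero_mul, add_zero] using h2
  have hD0 := hloc.hasDerivAt_eq_zero hφ
  -- rearrange the derivative
  set c : J → ℝ := fun j' => ∑ i, C i j' * (∑ j'', C i j'' * b j'' ^ t) ^ (Δ - 1) with hc_def
  have hswap : ∑ i, (Δ : ℝ) * (∑ j', C i j' * b j' ^ t) ^ (Δ - 1)
        * (∑ j', C i j' * (t * b j' ^ (t - 1) * d j'))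
      = (Δ : ℝ) * t * ∑ j', (b j' ^ (t - 1) * d j') * c j' := by
    calc ∑ i, (Δ : ℝ) * (∑ j', C i j' * b j' ^ t) ^ (Δ - 1)
          * (∑ j', C i j' * (t * b j' ^ (t - 1) * d j'))
        = ∑ i, ∑ j', (Δ : ℝ) * t * ((b j' ^ (t - 1) * d j')
            * (C i j' * (∑ j'', C i j'' * b j'' ^ t) ^ (Δ - 1))) := by
          refine Finset.sum_congr rfl fun i _ => ?_
          rw [Finset.mul_sum]
          exact Finset.sum_congr rfl fun j' _ => by ring
      _ = ∑ j', ∑ i, (Δ : ℝ) * t * ((b j' ^ (t - 1) * d j')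
            * (C i j' * (∑ j'', C i j'' * b j'' ^ t) ^ (Δ - 1))) := Finset.sum_comm
      _ = (Δ : ℝ) * t * ∑ j', (b j' ^ (t - 1) * d j') * c j' := by
          rw [Finset.mul_sum]
          refine Finset.sum_congr rfl fun j' _ => ?_
          have hcj : c j' = ∑ i, C i j' * (∑ j'', C i j'' * b j'' ^ t) ^ (Δ - 1) := rfl
          rw [hcj, Finset.mul_sum, Finset.mul_sum]
  rw [hswap] at hD0
  have hsum2 : ∑ j', (b j' ^ (t - 1) * d j') * c j'
      = b j ^ (t - 1) * c j - phiF Δ C b := by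
    have expand : ∀ j', (b j' ^ (t - 1) * d j') * c j'
        = (if j' = j then (1:ℝ) else 0) * (b j' ^ (t - 1) * c j') - b j' ^ t * c j' := by
      intro j'
      rcases eq_or_lt_of_le (hb0 j') with h0 | hpos
      · rw [← h0, Real.zero_rpow htm1, Real.zero_rpow (ne_of_gt ht0)]
        ring
      · have : b j' ^ (t - 1) * b j' = b j' ^ t := by
          nth_rewrite 2 [show t = (t - 1) + 1 by ring]
          rw [Real.rpow_add hpos, Real.rpow_one]
        rw [hd_def]
        simp only
        rw [mul_sub, sub_mul]
        rw [show b j' ^ (t - 1) * b j' * c j' = b j' ^ t * c j' by rw [this]]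
        ring
    rw [Finset.sum_congr rfl fun j' _ => expand j', Finset.sum_sub_distrib]
    simp only [ite_mul, one_mul, zero_mul]
    rw [Finset.sum_ite_eq' univ j (fun j' => b j' ^ (t - 1) * c j')]
    simp only [mem_univ, if_true]
    have hIsum' : (∑ j', b j' ^ t * c j') = phiF Δ C b := Isum
    rw [hIsum']
  rw [hsum2] at hD0
  have hkey : b j ^ (t - 1) * c j = phiF Δ C b := by
    have hne : (Δ : ℝ) * t ≠ 0 := by positivity
    rcases mul_eq_zero.1 hD0 with h | h
    · exact absurd h hne
    · linarith
  have hbt : b j ^ t = b j * b j ^ (t - 1) := by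
    nth_rewrite 1 [show t = 1 + (t - 1) by ring]
    rw [Real.rpow_add hbj, Real.rpow_one]
  have hkey' : b j ^ (t - 1) * (∑ i, C i j * (∑ j', C i j' * b j' ^ t) ^ (Δ - 1))
      = phiF Δ C b := hkey
  rw [hbt, mul_assoc, hkey']
  ring


theorem tensor_bound (q : ℕ) (Δ : ℕ) (hΔ : 3 ≤ Δ)
    (B : Fin q → Fin q → ℝ) (hB : ∀ i j, 0 ≤ B i j) (K : ℝ) (hK : 0 ≤ K)
    (hmax : ∀ b ∈ stdSimplex ℝ (Fin q), phiF Δ B b ≤ K)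
    (dd : Fin q × Fin q → ℝ) (hdd : dd ∈ stdSimplex ℝ (Fin q × Fin q)) :
    phiF Δ (fun ik jl : Fin q × Fin q => B ik.1 jl.1 * B ik.2 jl.2) dd ≤ K * K := by
  obtain ⟨hdd0, hdd1⟩ := hdd
  have hΔR : (3 : ℝ) ≤ (Δ : ℝ) := by exact_mod_cast hΔ
  have hΔpos : (0 : ℝ) < (Δ : ℝ) := by linarith
  set t : ℝ := tex Δ with ht_def
  have ht0 : 0 < t := div_pos (by linarith) hΔpos
  set p : ℝ := (Δ : ℝ) / ((Δ : ℝ) - 1) with hp_def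
  have hp0 : 0 < p := div_pos hΔpos (by linarith)
  have hp1 : 1 ≤ p := by
    rw [hp_def, le_div_iff₀ (by linarith)]
    linarith
  have hpt : p * t = 1 := by
    have h1 : ((Δ:ℝ) - 1) ≠ 0 := by linarith
    rw [hp_def, ht_def, tex]
    field_simp
  have htp : t * p = 1 := by rw [mul_comm]; exact hpt
  have htΔ : t * (Δ : ℝ) = (Δ : ℝ) - 1 := div_mul_cancel₀ _ (ne_of_gt hΔpos)
  have hcast : ((Δ - 1 : ℕ) : ℝ) = (Δ : ℝ) - 1 := by
    rw [Nat.cast_sub (by omega), Nat.cast_one]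
  have honedivp : 1 / p = t := by
    rw [eq_comm, eq_div_iff (ne_of_gt hp0), htp]
  -- the matrices
  set V : Fin q → Fin q → ℝ := fun j l => dd (j, l) ^ t with hV_def
  have hV0 : ∀ j l, 0 ≤ V j l := fun j l => Real.rpow_nonneg (hdd0 _) t
  set w : Fin q → Fin q → ℝ := fun k j => ∑ l, B k l * V j l with hw_def
  have hw0 : ∀ k j, 0 ≤ w k j :=
    fun k j => Finset.sum_nonneg fun l _ => mul_nonneg (hB k l) (hV0 j l)
  set m : Fin q → ℝ := fun l => (∑ j, V j l ^ p) ^ (1 / p) with hm_def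
  have hm0 : ∀ l, 0 ≤ m l := fun l => Real.rpow_nonneg
    (Finset.sum_nonneg fun j _ => Real.rpow_nonneg (hV0 j l) p) _
  -- Step A : rewrite the functional
  have stepA : phiF Δ (fun ik jl : Fin q × Fin q => B ik.1 jl.1 * B ik.2 jl.2) dd
      = ∑ k, ∑ i, (∑ j, B i j * w k j) ^ Δ := by
    rw [phiF]
    rw [Fintype.sum_prod_type]
    rw [Finset.sum_comm]
    refine Finset.sum_congr rfl fun k _ => Finset.sum_congr rfl fun i _ => ?_
    congr 1
    rw [Fintype.sum_prod_type]
    refine Finset.sum_congr rfl fun j _ => ?_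
    rw [hw_def]
    simp only
    rw [Finset.mul_sum]
    exact Finset.sum_congr rfl fun l _ => by rw [hV_def]; ring
  -- Step B : inner Hölder bound for each k
  have stepB : ∀ k, ∑ i, (∑ j, B i j * w k j) ^ Δ
      ≤ K * (∑ j, w k j ^ p) ^ (Δ - 1) := by
    intro k
    have := hom_bound Δ hΔ B hB K hK hmax (w k) (hw0 k)
    rw [← hp_def] at this
    exact this
  -- Step C : Minkowski inequality
  set P : ENNReal := ENNReal.ofReal p with hP_def
  haveI : Fact (1 ≤ P) := ⟨ENNReal.one_le_ofReal.2 hp1⟩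
  have hPt : P.toReal = p := ENNReal.toReal_ofReal hp0.le
  have stepC : ∀ k, (∑ j, w k j ^ p) ^ (Δ - 1) ≤ (∑ l, B k l * m l) ^ Δ := by
    intro k
    set L := (WithLp.linearEquiv P ℝ (Fin q → ℝ)).symm with hL_def
    have hLapp : ∀ (g : Fin q → ℝ) (i : Fin q), (L g) i = g i := fun g i => rfl
    have hfun : (fun j => w k j) = ∑ l, B k l • (fun j => V j l) := by
      funext j
      rw [Finset.sum_apply]
      simp only [Pi.smul_apply, smul_eq_mul]
      rfl
    have hsum : L (fun j => w k j) = ∑ l, B k l • L (fun j => V j l) := by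
      rw [hfun, _root_.map_sum]
      exact Finset.sum_congr rfl fun l _ => by rw [_root_.map_smul]
    have hnorm_w : ‖L (fun j => w k j)‖ = (∑ j, w k j ^ p) ^ (1 / p) := by
      rw [PiLp.norm_eq_sum (by rw [hPt]; exact hp0), hPt]
      congr 1
      refine Finset.sum_congr rfl fun j _ => ?_
      rw [hLapp, Real.norm_eq_abs, abs_of_nonneg (hw0 k j)]
    have hnorm_v : ∀ l, ‖L (fun j => V j l)‖ = m l := by
      intro l
      rw [PiLp.norm_eq_sum (by rw [hPt]; exact hp0), hPt, hm_def]
      congr 1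
      refine Finset.sum_congr rfl fun j _ => ?_
      rw [hLapp, Real.norm_eq_abs, abs_of_nonneg (hV0 j l)]
    have hmink : (∑ j, w k j ^ p) ^ (1 / p) ≤ ∑ l, B k l * m l := by
      rw [← hnorm_w, hsum]
      calc ‖∑ l, B k l • L (fun j => V j l)‖
          ≤ ∑ l, ‖B k l • L (fun j => V j l)‖ := norm_sum_le _ _
        _ = ∑ l, B k l * m l := by
            refine Finset.sum_congr rfl fun l _ => ?_
            rw [norm_smul, Real.norm_eq_abs, abs_of_nonneg (hB k l), hnorm_v]
    have hX0 : 0 ≤ ∑ j, w k j ^ p :=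
      Finset.sum_nonneg fun j _ => Real.rpow_nonneg (hw0 k j) p
    have hpow : ((∑ j, w k j ^ p) ^ (1 / p)) ^ Δ = (∑ j, w k j ^ p) ^ (Δ - 1 : ℕ) := by
      rw [← Real.rpow_natCast ((∑ j, w k j ^ p) ^ (1 / p)) Δ, ← Real.rpow_mul hX0,
        honedivp, htΔ, ← hcast, Real.rpow_natCast]
    calc (∑ j, w k j ^ p) ^ (Δ - 1)
        = ((∑ j, w k j ^ p) ^ (1 / p)) ^ Δ := hpow.symm
      _ ≤ (∑ l, B k l * m l) ^ Δ :=
          pow_le_pow_left₀ (Real.rpow_nonneg hX0 _) hmink Δ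
  -- Step D : outer Hölder bound
  have stepD : ∑ k, (∑ l, B k l * m l) ^ Δ ≤ K * (∑ l, m l ^ p) ^ (Δ - 1) := by
    have := hom_bound Δ hΔ B hB K hK hmax m hm0
    rw [← hp_def] at this
    exact this
  -- Step E : the normalization
  have stepE : (∑ l, m l ^ p) = 1 := by
    have h1 : ∀ l, m l ^ p = ∑ j, V j l ^ p := by
      intro l
      rw [hm_def]
      simp only
      rw [← Real.rpow_mul (Finset.sum_nonneg fun j _ => Real.rpow_nonneg (hV0 j l) p),
        one_div, inv_mul_cancel₀ (ne_of_gt hp0), Real.rpow_one]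
    have h2 : ∀ j l, V j l ^ p = dd (j, l) := by
      intro j l
      rw [hV_def]
      simp only
      rw [← Real.rpow_mul (hdd0 _), htp, Real.rpow_one]
    calc ∑ l, m l ^ p = ∑ l, ∑ j, V j l ^ p := Finset.sum_congr rfl fun l _ => h1 l
      _ = ∑ l, ∑ j, dd (j, l) :=
          Finset.sum_congr rfl fun l _ => Finset.sum_congr rfl fun j _ => h2 j l
      _ = ∑ j, ∑ l, dd (j, l) := Finset.sum_comm
      _ = 1 := by rw [← Fintype.sum_prod_type]; exact hdd1
  -- combine
  rw [stepA]
  calc ∑ k, ∑ i, (∑ j, B i j * w k j) ^ Δ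
      ≤ ∑ k, K * (∑ j, w k j ^ p) ^ (Δ - 1) := Finset.sum_le_sum fun k _ => stepB k
    _ = K * ∑ k, (∑ j, w k j ^ p) ^ (Δ - 1) := by rw [Finset.mul_sum]
    _ ≤ K * ∑ k, (∑ l, B k l * m l) ^ Δ := by
        refine mul_le_mul_of_nonneg_left (Finset.sum_le_sum fun k _ => stepC k) hK
    _ ≤ K * (K * (∑ l, m l ^ p) ^ (Δ - 1)) := mul_le_mul_of_nonneg_left stepD hK
    _ = K * K := by rw [stepE, one_pow, mul_one]


/-- construction of the optimal first-moment triple from a maximizer of `phiF` -/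
theorem first_moment_attained (q Δ : ℕ) (hq : 1 ≤ q) (hΔ : 3 ≤ Δ)
    (B : Fin q → Fin q → ℝ) (hB : ∀ i j, 0 ≤ B i j) (hBpos : ∃ i j, 0 < B i j)
    (b : Fin q → ℝ) (hbmem : b ∈ stdSimplex ℝ (Fin q))
    (hmax : ∀ b' ∈ stdSimplex ℝ (Fin q), phiF Δ B b' ≤ phiF Δ B b) :
    0 < phiF Δ B b ∧
    ∃ (a β : Fin q → ℝ) (x : Fin q → Fin q → ℝ),
      (∀ i, 0 ≤ a i) ∧ (∀ j, 0 ≤ β j) ∧ (∑ i, a i) = 1 ∧ (∑ j, β j) = 1 ∧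
      (∀ i j, 0 ≤ x i j) ∧ (∀ i j, B i j = 0 → x i j = 0) ∧
      (∀ i, (∑ j, x i j) = a i) ∧ (∀ j, (∑ i, x i j) = β j) ∧
      ((Δ : ℝ) - 1) * ((∑ i, a i * Real.log (a i)) + ∑ j, β j * Real.log (β j))
        + (Δ : ℝ) * ((∑ i, ∑ j, x i j * Real.log (B i j))
            - ∑ i, ∑ j, x i j * Real.log (x i j)) = Real.log (phiF Δ B b) := by
  obtain ⟨hb0, hb1⟩ := hbmem
  obtain ⟨i0, j0, hB0⟩ := hBpos
  have hΔR : (3 : ℝ) ≤ (Δ : ℝ) := by exact_mod_cast hΔ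
  have hΔpos : (0 : ℝ) < (Δ : ℝ) := by linarith
  have hΔne : (Δ : ℝ) ≠ 0 := ne_of_gt hΔpos
  set t : ℝ := tex Δ with ht_def
  have ht0 : 0 < t := div_pos (by linarith) hΔpos
  have htΔ : (Δ : ℝ) * t = (Δ : ℝ) - 1 := by
    rw [mul_comm]; exact div_mul_cancel₀ _ hΔne
  have hcast : ((Δ - 1 : ℕ) : ℝ) = (Δ : ℝ) - 1 := by
    rw [Nat.cast_sub (by omega), Nat.cast_one]
  set u : Fin q → ℝ := fun j => b j ^ t with hu_def
  have hu0 : ∀ j, 0 ≤ u j := fun j => Real.rpow_nonneg (hb0 j) t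
  set r : Fin q → ℝ := fun i => ∑ j, B i j * u j with hr_def
  have hr0 : ∀ i, 0 ≤ r i := fun i => Finset.sum_nonneg fun j _ => mul_nonneg (hB i j) (hu0 j)
  set K : ℝ := phiF Δ B b with hK_def
  have hKphi : K = ∑ i, r i ^ Δ := rfl
  -- positivity of K
  have hKpos : 0 < K := by
    set e : Fin q → ℝ := fun j' => if j' = j0 then (1:ℝ) else 0 with he_def
    have hemem : e ∈ stdSimplex ℝ (Fin q) := by
      constructor
      · intro j'; rw [he_def]; dsimp only; split <;> norm_num
      · rw [he_def]; simp
    have heval : phiF Δ B e = ∑ i, B i j0 ^ Δ := by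
      rw [phiF]
      refine Finset.sum_congr rfl fun i _ => ?_
      congr 1
      have : ∀ j', B i j' * e j' ^ tex Δ = if j' = j0 then B i j0 else 0 := by
        intro j'
        rw [he_def]
        dsimp only
        split
        · rename_i h; rw [h, Real.one_rpow, mul_one]
        · rw [Real.zero_rpow (ne_of_gt ht0), mul_zero]
      rw [Finset.sum_congr rfl fun j' _ => this j']
      simp
    have h1 : (0:ℝ) < ∑ i, B i j0 ^ Δ := by
      have h2 : B i0 j0 ^ Δ ≤ ∑ i, B i j0 ^ Δ :=
        Finset.single_le_sum (fun i _ => pow_nonneg (hB i j0) Δ) (mem_univ i0)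
      have h3 : 0 < B i0 j0 ^ Δ := pow_pos hB0 Δ
      linarith
    have := hmax e hemem
    rw [heval] at this
    rw [hK_def]
    linarith
  have hKne : K ≠ 0 := ne_of_gt hKpos
  -- the optimal triple
  set a : Fin q → ℝ := fun i => r i ^ Δ / K with ha_def
  set x : Fin q → Fin q → ℝ := fun i j => B i j * r i ^ (Δ - 1) * u j / K with hx_def
  have ha0 : ∀ i, 0 ≤ a i := fun i => div_nonneg (pow_nonneg (hr0 i) Δ) hKpos.le
  have hx0 : ∀ i j, 0 ≤ x i j := fun i j => div_nonneg
    (mul_nonneg (mul_nonneg (hB i j) (pow_nonneg (hr0 i) _)) (hu0 j)) hKpos.le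
  have hsupp : ∀ i j, B i j = 0 → x i j = 0 := by
    intro i j h
    rw [hx_def]; dsimp only; rw [h]; ring
  have hpowr : ∀ i, r i ^ (Δ - 1) * r i = r i ^ Δ := by
    intro i
    rw [← pow_succ]
    congr 1
    omega
  have hrow : ∀ i, (∑ j, x i j) = a i := by
    intro i
    rw [hx_def, ha_def]
    dsimp only
    rw [show (∑ j, B i j * r i ^ (Δ - 1) * u j / K)
        = (∑ j, B i j * u j) * r i ^ (Δ - 1) / K by
      rw [Finset.sum_mul, Finset.sum_div]
      exact Finset.sum_congr rfl fun j _ => by ring]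
    have hri : (∑ j, B i j * u j) = r i := rfl
    rw [hri, show r i * r i ^ (Δ - 1) = r i ^ (Δ - 1) * r i by ring, hpowr]
  have hkkt : ∀ j, u j * (∑ i, B i j * r i ^ (Δ - 1)) = K * b j := by
    intro j
    have := kkt Δ hΔ B hB b ⟨hb0, hb1⟩ hmax j
    exact this
  have hcol : ∀ j, (∑ i, x i j) = b j := by
    intro j
    rw [hx_def]
    dsimp only
    rw [show (∑ i, B i j * r i ^ (Δ - 1) * u j / K)
        = u j * (∑ i, B i j * r i ^ (Δ - 1)) / K by
      rw [Finset.mul_sum, Finset.sum_div]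
      exact Finset.sum_congr rfl fun i _ => by ring]
    rw [hkkt j, mul_comm, mul_div_assoc, div_self hKne, mul_one]
  have hsuma : (∑ i, a i) = 1 := by
    rw [ha_def]
    dsimp only
    rw [← Finset.sum_div, ← hKphi, div_self hKne]
  -- the value computation
  have hrpos : ∀ i, 0 < a i → 0 < r i := by
    intro i hai
    rcases eq_or_lt_of_le (hr0 i) with h | h
    · exfalso
      rw [ha_def] at hai
      dsimp only at hai
      rw [← h, zero_pow (by omega), zero_div] at hai
      exact lt_irrefl 0 hai
    · exact h
  have hterm : ∀ i j, x i j * Real.log (B i j) - x i j * Real.log (x i j)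
      = x i j * Real.log K - ((Δ:ℝ) - 1) * (x i j * Real.log (r i))
        - x i j * Real.log (u j) := by
    intro i j
    rcases eq_or_lt_of_le (hx0 i j) with h | h
    · rw [← h]; ring
    · have hfac : 0 < B i j * r i ^ (Δ - 1) * u j := by
        rcases eq_or_lt_of_le (mul_nonneg (mul_nonneg (hB i j) (pow_nonneg (hr0 i) _)) (hu0 j))
          with h2 | h2
        · exfalso
          rw [hx_def] at h
          dsimp only at h
          rw [← h2, zero_div] at h
          exact lt_irrefl 0 h
        · exact h2
      have hBp : 0 < B i j := by
        rcases eq_or_lt_of_le (hB i j) with h2 | h2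
        · exfalso; rw [← h2, zero_mul, zero_mul] at hfac; exact lt_irrefl 0 hfac
        · exact h2
      have hrp : 0 < r i ^ (Δ - 1) := by
        rcases eq_or_lt_of_le (pow_nonneg (hr0 i) (Δ - 1)) with h2 | h2
        · exfalso; rw [← h2, mul_zero, zero_mul] at hfac; exact lt_irrefl 0 hfac
        · exact h2
      have hup : 0 < u j := by
        rcases eq_or_lt_of_le (hu0 j) with h2 | h2
        · exfalso; rw [← h2, mul_zero] at hfac; exact lt_irrefl 0 hfac
        · exact h2
      have hri : 0 < r i := by
        rcases eq_or_lt_of_le (hr0 i) with h2 | h2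
        · exfalso; rw [← h2, zero_pow (show Δ - 1 ≠ 0 by omega)] at hrp; exact lt_irrefl 0 hrp
        · exact h2
      have hlogx : Real.log (x i j)
          = Real.log (B i j) + ((Δ:ℝ) - 1) * Real.log (r i) + Real.log (u j) - Real.log K := by
        rw [hx_def]
        dsimp only
        rw [Real.log_div (by positivity) hKne, Real.log_mul (by positivity) (ne_of_gt hup),
          Real.log_mul (ne_of_gt hBp) (ne_of_gt hrp), Real.log_pow, hcast]
      rw [hlogx]
      ring
  have hsumE : (∑ i, ∑ j, x i j * Real.log (B i j)) - (∑ i, ∑ j, x i j * Real.log (x i j))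
      = Real.log K - ((Δ:ℝ) - 1) * (∑ i, a i * Real.log (r i))
        - ∑ j, b j * Real.log (u j) := by
    have e1 : ∀ i, ∑ j, x i j * Real.log (r i) = a i * Real.log (r i) := by
      intro i
      rw [← Finset.sum_mul, hrow]
    have e2 : ∑ i, ∑ j, x i j * Real.log (u j) = ∑ j, b j * Real.log (u j) := by
      rw [Finset.sum_comm]
      exact Finset.sum_congr rfl fun j _ => by rw [← Finset.sum_mul, hcol]
    have e3 : ∑ i, ∑ j, x i j = 1 := by
      rw [Finset.sum_congr rfl fun i _ => hrow i, hsuma]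
    calc (∑ i, ∑ j, x i j * Real.log (B i j)) - (∑ i, ∑ j, x i j * Real.log (x i j))
        = ∑ i, ∑ j, (x i j * Real.log (B i j) - x i j * Real.log (x i j)) := by
          rw [← Finset.sum_sub_distrib]
          exact Finset.sum_congr rfl fun i _ => (Finset.sum_sub_distrib _ _).symm
      _ = ∑ i, ∑ j, (x i j * Real.log K - ((Δ:ℝ) - 1) * (x i j * Real.log (r i))
            - x i j * Real.log (u j)) := by
          exact Finset.sum_congr rfl fun i _ => Finset.sum_congr rfl fun j _ => hterm i j
      _ = (∑ i, ∑ j, x i j) * Real.log K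
            - ((Δ:ℝ) - 1) * (∑ i, ∑ j, x i j * Real.log (r i))
            - ∑ i, ∑ j, x i j * Real.log (u j) := by
          simp only [Finset.sum_sub_distrib, ← Finset.sum_mul, ← Finset.mul_sum]
      _ = Real.log K - ((Δ:ℝ) - 1) * (∑ i, a i * Real.log (r i))
            - ∑ j, b j * Real.log (u j) := by
          rw [e3, e2, one_mul, Finset.sum_congr rfl fun i _ => e1 i]
  have hs' : (Δ:ℝ) * (∑ i, a i * Real.log (r i))
      = Real.log K + ∑ i, a i * Real.log (a i) := by
    rw [Finset.mul_sum]
    have hterm2 : ∀ i, (Δ:ℝ) * (a i * Real.log (r i))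
        = a i * Real.log K + a i * Real.log (a i) := by
      intro i
      rcases eq_or_lt_of_le (ha0 i) with h | h
      · rw [← h]; ring
      · have hri := hrpos i h
        have hloga : Real.log (a i) = (Δ:ℝ) * Real.log (r i) - Real.log K := by
          rw [ha_def]
          dsimp only
          rw [Real.log_div (by positivity) hKne, Real.log_pow]
        rw [hloga]
        ring
    rw [Finset.sum_congr rfl fun i _ => hterm2 i, Finset.sum_add_distrib,
      ← Finset.sum_mul, hsuma, one_mul]
  have hlogu : ∀ j, b j * Real.log (u j) = t * (b j * Real.log (b j)) := by
    intro j
    rcases eq_or_lt_of_le (hb0 j) with h | h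
    · rw [← h]; simp
    · rw [hu_def]
      dsimp only
      rw [Real.log_rpow h]
      ring
  have hsumlogu : (∑ j, b j * Real.log (u j)) = t * ∑ j, b j * Real.log (b j) := by
    rw [Finset.sum_congr rfl fun j _ => hlogu j, ← Finset.mul_sum]
  refine ⟨hKpos, a, b, x, ha0, hb0, hsuma, hb1, hx0, hsupp, hrow, hcol, ?_⟩
  rw [hsumE, hsumlogu]
  linear_combination (-(((Δ:ℝ) - 1))) * hs'
    + (-(∑ j, b j * Real.log (b j))) * htΔ


/-- splitting a 4-fold sum of a product structure -/
theorem sum4_split {q : ℕ} (x : Fin q → Fin q → ℝ) (hx1 : (∑ i, ∑ j, x i j) = 1)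
    (P Q : Fin q → Fin q → ℝ) :
    ∑ i, ∑ k, ∑ j, ∑ l, (x k l * (x i j * P i j) + x i j * (x k l * Q k l))
      = (∑ i, ∑ j, x i j * P i j) + (∑ i, ∑ j, x i j * Q i j) := by
  have hsplit : ∀ i k, ∑ j, ∑ l, (x k l * (x i j * P i j) + x i j * (x k l * Q k l))
      = (∑ l, x k l) * (∑ j, x i j * P i j) + (∑ j, x i j) * (∑ l, x k l * Q k l) := by
    intro i k
    have e1 : ∀ j, ∑ l, x k l * (x i j * P i j) = (∑ l, x k l) * (x i j * P i j) :=
      fun j => by rw [Finset.sum_mul]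
    have e2 : ∀ j, ∑ l, x i j * (x k l * Q k l) = x i j * (∑ l, x k l * Q k l) :=
      fun j => by rw [Finset.mul_sum]
    calc ∑ j, ∑ l, (x k l * (x i j * P i j) + x i j * (x k l * Q k l))
        = ∑ j, ((∑ l, x k l) * (x i j * P i j) + x i j * (∑ l, x k l * Q k l)) := by
          refine Finset.sum_congr rfl fun j _ => ?_
          rw [Finset.sum_add_distrib, e1 j, e2 j]
      _ = (∑ l, x k l) * (∑ j, x i j * P i j) + (∑ j, x i j) * (∑ l, x k l * Q k l) := by
          rw [Finset.sum_add_distrib, ← Finset.mul_sum, ← Finset.sum_mul]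
  have hstep : ∀ i, ∑ k, (∑ l, x k l) * (∑ j, x i j * P i j)
      = ∑ j, x i j * P i j := by
    intro i
    rw [← Finset.sum_mul]
    rw [show (∑ k, ∑ l, x k l) = 1 from hx1, one_mul]
  have hstep2 : ∑ i, (∑ j, x i j) * (∑ k, ∑ l, x k l * Q k l)
      = ∑ k, ∑ l, x k l * Q k l := by
    rw [← Finset.sum_mul]
    rw [show (∑ i, ∑ j, x i j) = 1 from hx1, one_mul]
  calc ∑ i, ∑ k, ∑ j, ∑ l, (x k l * (x i j * P i j) + x i j * (x k l * Q k l))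
      = ∑ i, ∑ k, ((∑ l, x k l) * (∑ j, x i j * P i j)
          + (∑ j, x i j) * (∑ l, x k l * Q k l)) :=
        Finset.sum_congr rfl fun i _ => Finset.sum_congr rfl fun k _ => hsplit i k
    _ = ∑ i, ((∑ j, x i j * P i j) + (∑ j, x i j) * (∑ k, ∑ l, x k l * Q k l)) := by
        refine Finset.sum_congr rfl fun i _ => ?_
        rw [Finset.sum_add_distrib, hstep i, ← Finset.mul_sum]
    _ = (∑ i, ∑ j, x i j * P i j) + (∑ i, ∑ j, x i j * Q i j) := by
        rw [Finset.sum_add_distrib, hstep2]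

/-- splitting a 2-fold sum of a product structure -/
theorem sum2_split {q : ℕ} (a : Fin q → ℝ) (ha1 : (∑ i, a i) = 1) (P : Fin q → ℝ) :
    ∑ i, ∑ k, (a k * (a i * P i) + a i * (a k * P k)) = 2 * ∑ i, a i * P i := by
  have h1 : ∀ i, ∑ k, (a k * (a i * P i) + a i * (a k * P k))
      = (a i * P i) + a i * (∑ k, a k * P k) := by
    intro i
    rw [Finset.sum_add_distrib, ← Finset.sum_mul, ha1, one_mul, ← Finset.mul_sum]
  rw [Finset.sum_congr rfl fun i _ => h1 i, Finset.sum_add_distrib, ← Finset.sum_mul, ha1,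
    one_mul]
  ring


end SecondMomentAux

open SecondMomentAux Finset

/-- The maximum of the second-moment function Υ₂ over its feasible
region is attained and equals twice the maximum of the first-moment function Υ₁
over its feasible region (which is likewise attained). -/
theorem second_moment_max_eq_twice_first_moment_max
    (q Δ : ℕ) (hq : 1 ≤ q) (hΔ : 3 ≤ Δ)
    (B : Matrix (Fin q) (Fin q) ℝ) (hBsymm : B.IsSymm)
    (hBnonneg : ∀ i j, 0 ≤ B i j) (hBpos : ∃ i j, 0 < B i j) :
    ∃ M₁ M₂ : ℝ,
      IsGreatest { v : ℝ | ∃ (α β : Fin q → ℝ) (x : Fin q → Fin q → ℝ),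
          (∀ i, 0 ≤ α i) ∧ (∀ j, 0 ≤ β j) ∧ (∑ i, α i) = 1 ∧ (∑ j, β j) = 1 ∧
          (∀ i j, 0 ≤ x i j) ∧ (∀ i j, B i j = 0 → x i j = 0) ∧
          (∀ i, (∑ j, x i j) = α i) ∧ (∀ j, (∑ i, x i j) = β j) ∧
          v = ((Δ : ℝ) - 1) * ((∑ i, α i * Real.log (α i)) + ∑ j, β j * Real.log (β j))
              + (Δ : ℝ) * ((∑ i, ∑ j, x i j * Real.log (B i j))
                  - ∑ i, ∑ j, x i j * Real.log (x i j)) } M₁ ∧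
      IsGreatest { v : ℝ | ∃ (γ δ : Fin q → Fin q → ℝ)
            (y : Fin q → Fin q → Fin q → Fin q → ℝ),
          (∀ i k j l, 0 ≤ y i k j l) ∧
          (∀ i k j l, B i j * B k l = 0 → y i k j l = 0) ∧
          (∀ i k, γ i k = ∑ j, ∑ l, y i k j l) ∧
          (∀ j l, δ j l = ∑ i, ∑ k, y i k j l) ∧
          (∑ i, ∑ k, γ i k) = 1 ∧
          (∀ i, (∑ k, γ i k) = ∑ k, γ k i) ∧
          (∀ j, (∑ l, δ j l) = ∑ l, δ l j) ∧
          v = ((Δ : ℝ) - 1) * ((∑ i, ∑ k, γ i k * Real.log (γ i k))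
                  + ∑ j, ∑ l, δ j l * Real.log (δ j l))
              + (Δ : ℝ) * ((∑ i, ∑ k, ∑ j, ∑ l, y i k j l * Real.log (B i j * B k l))
                  - ∑ i, ∑ k, ∑ j, ∑ l, y i k j l * Real.log (y i k j l)) } M₂ ∧
      M₂ = 2 * M₁ := by
  classical
  have hΔR : (3 : ℝ) ≤ (Δ : ℝ) := by exact_mod_cast hΔ
  have ht0 : (0:ℝ) ≤ tex Δ := by
    rw [tex]
    apply div_nonneg <;> linarith
  -- obtain a maximizer of phiF over the simplex
  have hcont : Continuous (phiF Δ (fun i j => B i j)) := by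
    unfold phiF
    refine continuous_finset_sum _ fun i _ => ?_
    refine Continuous.pow ?_ Δ
    refine continuous_finset_sum _ fun j _ => ?_
    exact continuous_const.mul ((Real.continuous_rpow_const ht0).comp (continuous_apply j))
  have hne : (stdSimplex ℝ (Fin q)).Nonempty := by
    have hq0 : (q:ℝ) ≠ 0 := Nat.cast_ne_zero.2 (by omega)
    refine ⟨fun _ => 1 / q, fun _ => by positivity, ?_⟩
    rw [Finset.sum_const, Finset.card_univ, Fintype.card_fin, nsmul_eq_mul]
    field_simp
  obtain ⟨b, hbmem, hbmax'⟩ :=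
    (isCompact_stdSimplex ℝ (Fin q)).exists_isMaxOn hne hcont.continuousOn
  have hbmax : ∀ b' ∈ stdSimplex ℝ (Fin q),
      phiF Δ (fun i j => B i j) b' ≤ phiF Δ (fun i j => B i j) b := fun b' h => hbmax' h
  obtain ⟨hKpos, a, β, x, ha0, hβ0, ha1, hβ1, hx0, hxsupp, hxrow, hxcol, hval⟩ :=
    first_moment_attained q Δ hq hΔ (fun i j => B i j) hBnonneg hBpos b hbmem hbmax
  set K : ℝ := phiF Δ (fun i j => B i j) b with hK_def
  have hKne : K ≠ 0 := ne_of_gt hKpos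
  have hx1 : (∑ i, ∑ j, x i j) = 1 := by
    rw [Finset.sum_congr rfl fun i _ => hxrow i, ha1]
  -- conversion lemmas between product sums and iterated sums
  have conv1 : ∀ (g : Fin q → Fin q → ℝ),
      (∑ ik : Fin q × Fin q, g ik.1 ik.2) = ∑ i, ∑ k, g i k :=
    fun g => Fintype.sum_prod_type (f := fun ik : Fin q × Fin q => g ik.1 ik.2)
  have conv2 : ∀ (g : Fin q → Fin q → Fin q → Fin q → ℝ),
      (∑ ik : Fin q × Fin q, ∑ jl : Fin q × Fin q, g ik.1 ik.2 jl.1 jl.2)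
        = ∑ i, ∑ k, ∑ j, ∑ l, g i k j l := by
    intro g
    calc (∑ ik : Fin q × Fin q, ∑ jl : Fin q × Fin q, g ik.1 ik.2 jl.1 jl.2)
        = ∑ i, ∑ k, ∑ jl : Fin q × Fin q, g i k jl.1 jl.2 :=
          conv1 (fun i k => ∑ jl : Fin q × Fin q, g i k jl.1 jl.2)
      _ = ∑ i, ∑ k, ∑ j, ∑ l, g i k j l :=
          Finset.sum_congr rfl fun i _ => Finset.sum_congr rfl fun k _ =>
            conv1 (fun j l => g i k j l)
  refine ⟨Real.log K, 2 * Real.log K, ⟨?_, ?_⟩, ⟨?_, ?_⟩, by ring⟩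
  · -- membership for the first moment
    exact ⟨a, β, x, ha0, hβ0, ha1, hβ1, hx0, hxsupp, hxrow, hxcol, hval.symm⟩
  · -- upper bound for the first moment
    rintro v ⟨α', β', x', h1, h2, h3, h4, h5, h6, h7, h8, hv⟩
    obtain ⟨hpos', hle'⟩ :=
      value_le_log_phiF Δ hΔ (fun i j => B i j) hBnonneg α' β' x' h5 h6 h7 h8 h3
    have hle2 : phiF Δ (fun i j => B i j) β' ≤ K := hbmax β' ⟨h2, h4⟩
    have hle3 := (Real.log_le_log_iff hpos' hKpos).2 hle2
    rw [hv]
    linarith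
  · -- membership for the second moment : product construction
    have c1 : ∀ i k j l, (0:ℝ) ≤ x i j * x k l :=
      fun i k j l => mul_nonneg (hx0 i j) (hx0 k l)
    have c2 : ∀ i k j l, B i j * B k l = 0 → x i j * x k l = 0 := by
      intro i k j l h
      rcases mul_eq_zero.1 h with h' | h'
      · rw [hxsupp i j h', zero_mul]
      · rw [hxsupp k l h', mul_zero]
    have c3 : ∀ i k, a i * a k = ∑ j, ∑ l, x i j * x k l := by
      intro i k
      rw [← hxrow i, ← hxrow k]
      exact Finset.sum_mul_sum _ _ _ _
    have c4 : ∀ j l, β j * β l = ∑ i, ∑ k, x i j * x k l := by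
      intro j l
      rw [← hxcol j, ← hxcol l]
      exact Finset.sum_mul_sum _ _ _ _
    have c5 : (∑ i, ∑ k, a i * a k) = 1 := by
      have h5' : ∀ i, (∑ k, a i * a k) = a i := fun i => by
        rw [← Finset.mul_sum, ha1, mul_one]
      rw [Finset.sum_congr rfl fun i _ => h5' i]
      exact ha1
    have c6 : ∀ i, (∑ k, a i * a k) = ∑ k, a k * a i := by
      intro i
      rw [← Finset.mul_sum, ha1, mul_one, ← Finset.sum_mul, ha1, one_mul]
    have c7 : ∀ j, (∑ l, β j * β l) = ∑ l, β l * β j := by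
      intro j
      rw [← Finset.mul_sum, hβ1, mul_one, ← Finset.sum_mul, hβ1, one_mul]
    have claim1 : ∀ (z : Fin q → ℝ), (∀ i, 0 ≤ z i) → ∀ i k,
        (z i * z k) * Real.log (z i * z k)
          = z k * (z i * Real.log (z i)) + z i * (z k * Real.log (z k)) := by
      intro z hz i k
      rcases eq_or_lt_of_le (hz i) with h | h
      · rw [← h]; simp
      · rcases eq_or_lt_of_le (hz k) with h' | h'
        · rw [← h']; simp
        · rw [Real.log_mul (ne_of_gt h) (ne_of_gt h')]; ring
    have S1 : (∑ i, ∑ k, (a i * a k) * Real.log (a i * a k))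
        = 2 * ∑ i, a i * Real.log (a i) := by
      rw [Finset.sum_congr rfl fun i _ => Finset.sum_congr rfl fun k _ =>
        claim1 a ha0 i k]
      exact sum2_split a ha1 (fun i => Real.log (a i))
    have S2 : (∑ j, ∑ l, (β j * β l) * Real.log (β j * β l))
        = 2 * ∑ j, β j * Real.log (β j) := by
      rw [Finset.sum_congr rfl fun j _ => Finset.sum_congr rfl fun l _ =>
        claim1 β hβ0 j l]
      exact sum2_split β hβ1 (fun j => Real.log (β j))
    have claim3 : ∀ i k j l, (x i j * x k l) * Real.log (B i j * B k l)
        = x k l * (x i j * Real.log (B i j)) + x i j * (x k l * Real.log (B k l)) := by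
      intro i k j l
      rcases eq_or_lt_of_le (hx0 i j) with h | h
      · rw [← h]; simp
      · rcases eq_or_lt_of_le (hx0 k l) with h' | h'
        · rw [← h']; simp
        · have hB1 : B i j ≠ 0 := fun hb => by rw [hxsupp i j hb] at h; exact lt_irrefl 0 h
          have hB2 : B k l ≠ 0 := fun hb => by rw [hxsupp k l hb] at h'; exact lt_irrefl 0 h'
          rw [Real.log_mul hB1 hB2]; ring
    have claim4 : ∀ i k j l, (x i j * x k l) * Real.log (x i j * x k l)
        = x k l * (x i j * Real.log (x i j)) + x i j * (x k l * Real.log (x k l)) := by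
      intro i k j l
      rcases eq_or_lt_of_le (hx0 i j) with h | h
      · rw [← h]; simp
      · rcases eq_or_lt_of_le (hx0 k l) with h' | h'
        · rw [← h']; simp
        · rw [Real.log_mul (ne_of_gt h) (ne_of_gt h')]; ring
    have S3 : (∑ i, ∑ k, ∑ j, ∑ l, (x i j * x k l) * Real.log (B i j * B k l))
        = 2 * ∑ i, ∑ j, x i j * Real.log (B i j) := by
      rw [Finset.sum_congr rfl fun i _ => Finset.sum_congr rfl fun k _ =>
        Finset.sum_congr rfl fun j _ => Finset.sum_congr rfl fun l _ => claim3 i k j l]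
      rw [sum4_split x hx1 (fun i j => Real.log (B i j)) (fun i j => Real.log (B i j))]
      ring
    have S4 : (∑ i, ∑ k, ∑ j, ∑ l, (x i j * x k l) * Real.log (x i j * x k l))
        = 2 * ∑ i, ∑ j, x i j * Real.log (x i j) := by
      rw [Finset.sum_congr rfl fun i _ => Finset.sum_congr rfl fun k _ =>
        Finset.sum_congr rfl fun j _ => Finset.sum_congr rfl fun l _ => claim4 i k j l]
      rw [sum4_split x hx1 (fun i j => Real.log (x i j)) (fun i j => Real.log (x i j))]
      ring
    have c9 : 2 * Real.log K
        = ((Δ : ℝ) - 1) * ((∑ i, ∑ k, (a i * a k) * Real.log (a i * a k))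
              + ∑ j, ∑ l, (β j * β l) * Real.log (β j * β l))
          + (Δ : ℝ) * ((∑ i, ∑ k, ∑ j, ∑ l,
                (x i j * x k l) * Real.log (B i j * B k l))
              - ∑ i, ∑ k, ∑ j, ∑ l, (x i j * x k l) * Real.log (x i j * x k l)) := by
      have hval' : ((Δ : ℝ) - 1) * ((∑ i, a i * Real.log (a i)) + ∑ j, β j * Real.log (β j))
          + (Δ : ℝ) * ((∑ i, ∑ j, x i j * Real.log (B i j))
              - ∑ i, ∑ j, x i j * Real.log (x i j)) = Real.log K := hval
      rw [S1, S2, S3, S4]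
      linear_combination (-2 : ℝ) * hval'
    exact ⟨fun i k => a i * a k, fun j l => β j * β l, fun i k j l => x i j * x k l,
      c1, c2, c3, c4, c5, c6, c7, c9⟩
  · -- upper bound for the second moment
    rintro v ⟨γ, δ, y, hy0, hysupp, hγdef, hδdef, hγ1, hγbal, hδbal, hv⟩
    obtain ⟨hpos2, hle2⟩ := value_le_log_phiF (I := Fin q × Fin q) (J := Fin q × Fin q) Δ hΔ
      (fun ik jl => B ik.1 jl.1 * B ik.2 jl.2)
      (fun ik jl => mul_nonneg (hBnonneg _ _) (hBnonneg _ _))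
      (fun ik => γ ik.1 ik.2) (fun jl => δ jl.1 jl.2)
      (fun ik jl => y ik.1 ik.2 jl.1 jl.2)
      (fun ik jl => hy0 _ _ _ _)
      (fun ik jl h => hysupp _ _ _ _ h)
      (fun ik => (conv1 (fun j l => y ik.1 ik.2 j l)).trans (hγdef ik.1 ik.2).symm)
      (fun jl => (conv1 (fun i k => y i k jl.1 jl.2)).trans (hδdef jl.1 jl.2).symm)
      ((conv1 γ).trans hγ1)
    have hδmem : (fun jl : Fin q × Fin q => δ jl.1 jl.2) ∈ stdSimplex ℝ (Fin q × Fin q) := by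
      constructor
      · intro jl
        show 0 ≤ δ jl.1 jl.2
        rw [hδdef]
        exact Finset.sum_nonneg fun i _ => Finset.sum_nonneg fun k _ => hy0 _ _ _ _
      · show (∑ jl : Fin q × Fin q, δ jl.1 jl.2) = 1
        rw [conv1 δ]
        calc ∑ j, ∑ l, δ j l = ∑ j, ∑ l, ∑ i, ∑ k, y i k j l :=
              Finset.sum_congr rfl fun j _ => Finset.sum_congr rfl fun l _ => hδdef j l
          _ = ∑ jl : Fin q × Fin q, ∑ ik : Fin q × Fin q, y ik.1 ik.2 jl.1 jl.2 :=
              (conv2 (fun j l i k => y i k j l)).symm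
          _ = ∑ ik : Fin q × Fin q, ∑ jl : Fin q × Fin q, y ik.1 ik.2 jl.1 jl.2 :=
              Finset.sum_comm
          _ = ∑ i, ∑ k, ∑ j, ∑ l, y i k j l := conv2 (fun i k j l => y i k j l)
          _ = ∑ i, ∑ k, γ i k := (Finset.sum_congr rfl fun i _ =>
              Finset.sum_congr rfl fun k _ => (hγdef i k).symm)
          _ = 1 := hγ1
    have htensor := tensor_bound q Δ hΔ (fun i j => B i j) hBnonneg K hKpos.le hbmax
      (fun jl => δ jl.1 jl.2) hδmem
    have h1 : (∑ ik : Fin q × Fin q, γ ik.1 ik.2 * Real.log (γ ik.1 ik.2))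
        = ∑ i, ∑ k, γ i k * Real.log (γ i k) := conv1 (fun i k => γ i k * Real.log (γ i k))
    have h2 : (∑ jl : Fin q × Fin q, δ jl.1 jl.2 * Real.log (δ jl.1 jl.2))
        = ∑ j, ∑ l, δ j l * Real.log (δ j l) := conv1 (fun j l => δ j l * Real.log (δ j l))
    have h3 : (∑ ik : Fin q × Fin q, ∑ jl : Fin q × Fin q,
          y ik.1 ik.2 jl.1 jl.2 * Real.log (B ik.1 jl.1 * B ik.2 jl.2))
        = ∑ i, ∑ k, ∑ j, ∑ l, y i k j l * Real.log (B i j * B k l) :=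
      conv2 (fun i k j l => y i k j l * Real.log (B i j * B k l))
    have h4 : (∑ ik : Fin q × Fin q, ∑ jl : Fin q × Fin q,
          y ik.1 ik.2 jl.1 jl.2 * Real.log (y ik.1 ik.2 jl.1 jl.2))
        = ∑ i, ∑ k, ∑ j, ∑ l, y i k j l * Real.log (y i k j l) :=
      conv2 (fun i k j l => y i k j l * Real.log (y i k j l))
    rw [← h1, ← h2, ← h3, ← h4] at hv
    have hKK : (0:ℝ) < K * K := mul_pos hKpos hKpos
    have hlog2 := (Real.log_le_log_iff hpos2 hKK).2 htensor
    have hlogKK : Real.log (K * K) = 2 * Real.log K := by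
      rw [Real.log_mul hKne hKne]; ring
    rw [hv]
    calc ((Δ : ℝ) - 1) * ((∑ ik : Fin q × Fin q, γ ik.1 ik.2 * Real.log (γ ik.1 ik.2))
            + ∑ jl : Fin q × Fin q, δ jl.1 jl.2 * Real.log (δ jl.1 jl.2))
          + (Δ : ℝ) * ((∑ ik : Fin q × Fin q, ∑ jl : Fin q × Fin q,
              y ik.1 ik.2 jl.1 jl.2 * Real.log (B ik.1 jl.1 * B ik.2 jl.2))
            - ∑ ik : Fin q × Fin q, ∑ jl : Fin q × Fin q,
              y ik.1 ik.2 jl.1 jl.2 * Real.log (y ik.1 ik.2 jl.1 jl.2))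
        ≤ Real.log (phiF Δ (fun ik jl : Fin q × Fin q => B ik.1 jl.1 * B ik.2 jl.2)
            (fun jl => δ jl.1 jl.2)) := hle2
      _ ≤ Real.log (K * K) := hlog2
      _ = 2 * Real.log K := hlogKK
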